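/- arXiv:2303.16705 — 8 statements merged into one kernel-verified Lean document; each statement's English description precedes it below -/
import Mathlib

section
/- Let a ∈ ℚ with a ≠ 0 and a ≠ −1. Let A and B be the 4×4 rational matrices A = [[1,0,a,0],[0,a,0,1],[a,0,1,0],[0,1,0,a]] and B = [[1,a,0,0],[a,1,0,0],[0,0,a,1],[0,0,1,a]]. Then A·B·A = (a + a²)·M(z), where z = (1 + a³)/(a + a²) (which also equals a + a⁻¹ − 1). -/
/-- For a scalar `t`, the 4×4 matrix `[[t,1,1,1],[1,1,t,1],[1,t,1,1],[1,1,1,t]]`. -/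
def Mmat (t : ℚ) : Matrix (Fin 4) (Fin 4) ℚ :=
  !![t, 1, 1, 1; 1, 1, t, 1; 1, t, 1, 1; 1, 1, 1, t]

/-- `A·B·A = (a+a²)·M(z)` with `z = (1+a³)/(a+a²) = a + a⁻¹ - 1`. -/
theorem stmt7 (a : ℚ) (ha : a ≠ 0) (ha' : a ≠ -1) :
    ((!![1, 0, a, 0; 0, a, 0, 1; a, 0, 1, 0; 0, 1, 0, a] : Matrix (Fin 4) (Fin 4) ℚ) *
     (!![1, a, 0, 0; a, 1, 0, 0; 0, 0, a, 1; 0, 0, 1, a] : Matrix (Fin 4) (Fin 4) ℚ) *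
     (!![1, 0, a, 0; 0, a, 0, 1; a, 0, 1, 0; 0, 1, 0, a] : Matrix (Fin 4) (Fin 4) ℚ))
      = (a + a ^ 2) • Mmat ((1 + a ^ 3) / (a + a ^ 2)) ∧
    (1 + a ^ 3) / (a + a ^ 2) = a + a⁻¹ - 1 := by
  have hne : a + a ^ 2 ≠ 0 := by
    intro h
    rcases mul_eq_zero.mp (by ring_nf; linear_combination h : a * (1 + a) = 0) with h1 | h1
    · exact ha h1
    · exact ha' (by linarith)
  have h1a : 1 + a ≠ 0 := fun h => ha' (by linarith)
  constructor
  · ext i j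
    fin_cases i <;> fin_cases j <;>
      simp [Mmat, Matrix.mul_apply, Fin.sum_univ_succ, Matrix.vecHead, Matrix.vecTail] <;>
      (try field_simp) <;> ring
  · field_simp
    ring
end

section
/- Let z ∈ ℝ with z > 1, and let (x_s)_{s≥0} be the sequence defined by x₀ = z and x_{s+1} = (6 + 6z + 3x_s + z²x_s)/(7 + 4z + z² + 2x_s + 2z·x_s). Then for every s ≥ 0 one has x_s > 1 and x_{s+1} < x_s; in particular the denominator 7 + 4z + z² + 2x_s + 2z·x_s is positive for every s. -/
/-- for `z > 1`, the sequence `(x_s)` satisfies `x_s > 1` and is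
strictly decreasing; moreover all denominators are positive. -/
theorem stmt9 (z : ℝ) (hz : 1 < z) (x : ℕ → ℝ)
    (hx0 : x 0 = z)
    (hxs : ∀ s : ℕ, x (s + 1) =
      (6 + 6 * z + 3 * x s + z ^ 2 * x s) /
        (7 + 4 * z + z ^ 2 + 2 * x s + 2 * z * x s)) :
    (∀ s : ℕ, 1 < x s ∧ x (s + 1) < x s) ∧
    (∀ s : ℕ, 0 < 7 + 4 * z + z ^ 2 + 2 * x s + 2 * z * x s) := by
  have hgt : ∀ s, 1 < x s := by
    intro s
    induction s with
    | zero => rw [hx0]; exact hz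
    | succ n ih =>
      have hD : 0 < 7 + 4 * z + z ^ 2 + 2 * x n + 2 * z * x n := by nlinarith
      rw [hxs n, lt_div_iff₀ hD]
      nlinarith [mul_pos (sub_pos.mpr ih) (pow_pos (show (0:ℝ) < z - 1 by linarith) 2)]
  have hD : ∀ s, 0 < 7 + 4 * z + z ^ 2 + 2 * x s + 2 * z * x s := by
    intro s; have := hgt s; nlinarith
  refine ⟨fun s => ⟨hgt s, ?_⟩, hD⟩
  rw [hxs s, div_lt_iff₀ (hD s)]
  nlinarith [mul_pos (mul_pos (show (0:ℝ) < 1 + z by linarith) (sub_pos.mpr (hgt s))) (show (0:ℝ) < x s + 3 by nlinarith [hgt s])]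
end

section
/- Let z ∈ ℝ with z < −3, and let (x_s)_{s≥0} be the sequence defined by x₀ = z and x_{s+1} = (6 + 6z + 3x_s + z²x_s)/(7 + 4z + z² + 2x_s + 2z·x_s). Then for every s ≥ 0 one has x_s < −3 and x_{s+1} > x_s; in particular the denominator 7 + 4z + z² + 2x_s + 2z·x_s is positive for every s. -/
/-- for `z < -3`, the sequence `(x_s)` satisfies `x_s < -3` and is
strictly increasing; moreover all denominators are positive. -/
theorem stmt10 (z : ℝ) (hz : z < -3) (x : ℕ → ℝ)
    (hx0 : x 0 = z)
    (hxs : ∀ s : ℕ, x (s + 1) =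
      (6 + 6 * z + 3 * x s + z ^ 2 * x s) /
        (7 + 4 * z + z ^ 2 + 2 * x s + 2 * z * x s)) :
    (∀ s : ℕ, x s < -3 ∧ x s < x (s + 1)) ∧
    (∀ s : ℕ, 0 < 7 + 4 * z + z ^ 2 + 2 * x s + 2 * z * x s) := by
  have key : ∀ s : ℕ, x s < -3 := by
    intro s
    induction s with
    | zero => rw [hx0]; exact hz
    | succ n ih =>
      have hD : 0 < 7 + 4 * z + z ^ 2 + 2 * x n + 2 * z * x n := by
        nlinarith [sq_nonneg (z - 1), sq_nonneg (z + 2)]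
      rw [hxs n, div_lt_iff₀ hD]
      nlinarith [mul_pos (mul_pos (by linarith : (0:ℝ) < -(z + 3)) (by linarith : (0:ℝ) < -(z + 3))) (by linarith : (0:ℝ) < -(x n + 3))]
  have hD : ∀ s : ℕ, 0 < 7 + 4 * z + z ^ 2 + 2 * x s + 2 * z * x s := by
    intro s
    have := key s
    nlinarith [sq_nonneg (z - 1), sq_nonneg (z + 2)]
  refine ⟨fun s => ⟨key s, ?_⟩, hD⟩
  have h1 := key s
  rw [hxs s, lt_div_iff₀ (hD s)]
  nlinarith [mul_pos (mul_pos (by linarith : (0:ℝ) < -(1 + z)) (by linarith : (0:ℝ) < -(x s + 3))) (by linarith : (0:ℝ) < -(x s - 1))]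
end

section
/- Let a, b, c ∈ ℚ with c ≠ ab, and let λ, μ ∈ ℂ be the eigenvalues of the matrix [[1,b],[a,c]], i.e. complex numbers satisfying λ + μ = 1 + c and λ·μ = c − ab (so μ ≠ 0). If λ/μ is a root of unity, i.e. (λ/μ)ⁿ = 1 for some integer n ≥ 1, then at least one of the following holds: c + 1 = 0, or ab + c² + c + 1 = 0, or 2ab + c² + 1 = 0, or 3ab + c² − c + 1 = 0, or 4ab + c² − 2c + 1 = 0. -/
/-- if the ratio of the eigenvalues of `[[1,b],[a,c]]` (with
`c ≠ ab`) is a root of unity, then one of the five listed rational equations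
holds. -/
theorem stmt13 (a b c : ℚ) (hc : c ≠ a * b) (lam mu : ℂ)
    (hsum : lam + mu = 1 + (c : ℂ))
    (hprod : lam * mu = (c : ℂ) - (a : ℂ) * (b : ℂ))
    (hroot : ∃ n : ℕ, 1 ≤ n ∧ (lam / mu) ^ n = 1) :
    c + 1 = 0 ∨
    a * b + c ^ 2 + c + 1 = 0 ∨
    2 * a * b + c ^ 2 + 1 = 0 ∨
    3 * a * b + c ^ 2 - c + 1 = 0 ∨
    4 * a * b + c ^ 2 - 2 * c + 1 = 0 := by
  obtain ⟨n, hn1, hrn⟩ := hroot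
  have hcabQ : c - a * b ≠ 0 := sub_ne_zero.mpr hc
  have hcab : (c : ℂ) - (a : ℂ) * (b : ℂ) ≠ 0 := by
    intro h
    apply hcabQ
    have : ((c - a * b : ℚ) : ℂ) = 0 := by push_cast; linear_combination h
    exact_mod_cast this
  have hmul : lam * mu ≠ 0 := hprod ▸ hcab
  have hlam : lam ≠ 0 := left_ne_zero_of_mul hmul
  have hmu : mu ≠ 0 := right_ne_zero_of_mul hmul
  set r : ℂ := lam / mu with hr
  have hr0 : r ≠ 0 := div_ne_zero hlam hmu
  have habs : ‖r‖ = 1 := Complex.norm_eq_one_of_pow_eq_one hrn (by omega)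
  set Q : ℚ := ((1 + c) ^ 2 - 2 * (c - a * b)) / (c - a * b) with hQdef
  have hQ : (Q : ℂ) = r + r⁻¹ := by
    have hsq : (lam + mu) ^ 2 = (1 + (c : ℂ)) ^ 2 := by rw [hsum]
    have hnum : lam ^ 2 + mu ^ 2
        = (1 + (c : ℂ)) ^ 2 - 2 * ((c : ℂ) - (a : ℂ) * (b : ℂ)) := by
      linear_combination hsq - 2 * hprod
    rw [hQdef, hr]
    push_cast
    rw [inv_div, div_add_div _ _ hmu hlam, div_eq_div_iff hcab (mul_ne_zero hmu hlam)]
    linear_combination (-(mu * lam)) * hnum + (lam ^ 2 + mu ^ 2) * hprod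
  have hir : IsIntegral ℤ r := by
    refine ⟨Polynomial.X ^ n - Polynomial.C 1, Polynomial.monic_X_pow_sub_C 1 (by omega), ?_⟩
    simp [hrn]
  have hiri : IsIntegral ℤ r⁻¹ := by
    have hinv : r⁻¹ = r ^ (n - 1) := by
      refine inv_eq_of_mul_eq_one_right ?_
      rw [← pow_succ', show n - 1 + 1 = n from by omega, hrn]
    rw [hinv]
    exact hir.pow _
  have hiQ : IsIntegral ℤ ((Q : ℚ) : ℂ) := by
    rw [show ((Q : ℚ) : ℂ) = r + r⁻¹ from hQ]
    exact hir.add hiri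
  have hiQ' : IsIntegral ℤ Q := by
    have hinj : Function.Injective (algebraMap ℚ ℂ) := (algebraMap ℚ ℂ).injective
    exact IsIntegral.tower_bot hinj (by simpa using hiQ)
  obtain ⟨m, hm⟩ := IsIntegrallyClosed.isIntegral_iff.mp hiQ'
  have hQbound : |Q| ≤ 2 := by
    have h1 : ‖(Q : ℂ)‖ ≤ 2 := by
      rw [hQ]
      calc ‖r + r⁻¹‖ ≤ ‖r‖ + ‖r⁻¹‖ := norm_add_le _ _
        _ = 2 := by rw [norm_inv, habs]; norm_num
    have h2 : ‖(Q : ℂ)‖ = |(Q : ℝ)| := by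
      rw [show ((Q : ℚ) : ℂ) = ((Q : ℝ) : ℂ) by norm_cast]
      exact (Complex.norm_real _).trans (Real.norm_eq_abs _)
    have h3 : |(Q : ℝ)| ≤ 2 := by rw [← h2]; exact h1
    exact_mod_cast h3
  have hmQ : (m : ℚ) = Q := by exact_mod_cast hm
  have hmb : |m| ≤ 2 := by
    have : |(m : ℚ)| ≤ 2 := hmQ ▸ hQbound
    exact_mod_cast this
  have hmb1 : -2 ≤ m := by have := abs_le.mp hmb; exact this.1
  have hmb2 : m ≤ 2 := (abs_le.mp hmb).2
  rw [hQdef, eq_div_iff hcabQ] at hmQ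
  interval_cases m <;> push_cast at hmQ
  · left
    have h : (c + 1) ^ 2 = 0 := by linear_combination -hmQ
    exact (pow_eq_zero_iff two_ne_zero).mp h
  · right; left; linear_combination -hmQ
  · right; right; left; linear_combination -hmQ
  · right; right; right; left; linear_combination -hmQ
  · right; right; right; right; linear_combination -hmQ
end

section
/- Let a, b, c ∈ ℚ and set w = 1 + ab, a' = a + b², b' = a² + bc, c' = ab + c². Suppose w·c' ≠ a'·b', and let λ', μ' ∈ ℂ be the eigenvalues of the matrix [[w,b'],[a',c']], i.e. complex numbers satisfying λ' + μ' = w + c' and λ'·μ' = w·c' − a'·b' (so μ' ≠ 0). Set A = w + c' and B = (c' − w)² + 4a'b'. If λ'/μ' is a root of unity, i.e. (λ'/μ')ⁿ = 1 for some integer n ≥ 1, then at least one of the following holds: A = 0, or B = 0, or A² + B = 0, or A² + 3B = 0, or 3A² + B = 0. -/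
lemma aux14 (P S : ℚ) (hP : P ≠ 0) (lam mu : ℂ)
    (hsum : lam + mu = (S : ℂ)) (hprod : lam * mu = (P : ℂ))
    (n : ℕ) (hn : 1 ≤ n) (hr : (lam / mu) ^ n = 1) :
    ∃ z : ℤ, |z| ≤ 2 ∧ S ^ 2 - 2 * P = z * P := by
  have hPc : (P : ℂ) ≠ 0 := by exact_mod_cast hP
  have hmu : mu ≠ 0 := by
    intro h; apply hPc; rw [← hprod, h, mul_zero]
  have hlam : lam ≠ 0 := by
    intro h; apply hPc; rw [← hprod, h, zero_mul]
  set r : ℂ := lam / mu with hrdef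
  have hr0 : r ≠ 0 := div_ne_zero hlam hmu
  have hint_r : IsIntegral ℤ r := by
    refine ⟨Polynomial.X ^ n - 1, ?_, ?_⟩
    · simpa using Polynomial.monic_X_pow_sub_C (1 : ℤ) (by omega)
    · simp [hr, sub_eq_zero]
  have hpowsplit : r ^ n = r * r ^ (n - 1) := by
    conv_lhs => rw [show n = 1 + (n - 1) by omega]
    rw [pow_add, pow_one]
  have hinv : r⁻¹ = r ^ (n - 1) := by
    refine inv_eq_of_mul_eq_one_right ?_
    rw [← hpowsplit, hr]
  have hint_t : IsIntegral ℤ (r + r⁻¹) := by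
    rw [hinv]; exact hint_r.add (hint_r.pow _)
  set q : ℚ := (S ^ 2 - 2 * P) / P with hqdef
  have h2 : lam ^ 2 + mu ^ 2 = (S : ℂ) ^ 2 - 2 * (P : ℂ) := by
    linear_combination (lam + mu + (S : ℂ)) * hsum - 2 * hprod
  have hqt : (q : ℂ) = r + r⁻¹ := by
    have h3 : r + r⁻¹ = (lam ^ 2 + mu ^ 2) / (lam * mu) := by
      rw [hrdef]; field_simp
    rw [h3, h2, hprod, hqdef]; push_cast; ring
  have hint_q : IsIntegral ℤ q := by
    have heq : algebraMap ℚ ℂ q = r + r⁻¹ := by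
      rw [eq_ratCast (algebraMap ℚ ℂ) q]; exact hqt
    have h' : IsIntegral ℤ (algebraMap ℚ ℂ q) := heq ▸ hint_t
    exact IsIntegral.tower_bot (algebraMap ℚ ℂ).injective h'
  obtain ⟨z, hz⟩ := IsIntegrallyClosed.isIntegral_iff.mp hint_q
  rw [eq_intCast] at hz
  have habs_r : ‖r‖ = 1 := Complex.norm_eq_one_of_pow_eq_one hr (by omega)
  have hb : |q| ≤ 2 := by
    have h1 : ‖((q : ℚ) : ℂ)‖ ≤ 2 := by
      rw [hqt]
      calc ‖r + r⁻¹‖ ≤ ‖r‖ + ‖r⁻¹‖ :=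
            norm_add_le _ _
        _ = 2 := by rw [norm_inv, habs_r]; norm_num
    rw [show ((q : ℚ) : ℂ) = (((q : ℝ)) : ℂ) by push_cast; ring,
      Complex.norm_real, Real.norm_eq_abs] at h1
    exact_mod_cast h1
  have hzb : |z| ≤ 2 := by
    have : |(z : ℚ)| ≤ 2 := by rw [hz]; exact hb
    exact_mod_cast this
  refine ⟨z, hzb, ?_⟩
  have hq2 : (z : ℚ) = (S ^ 2 - 2 * P) / P := by rw [hz, hqdef]
  field_simp at hq2
  linarith [hq2]

/-- with `w = 1+ab`, `a' = a+b²`, `b' = a²+bc`, `c' = ab+c²`,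
`A = w + c'` and `B = (c'-w)² + 4a'b'`, if the matrix `[[w,b'],[a',c']]` is
non-degenerate and the ratio of its eigenvalues is a root of unity, then one of
the five listed rational equations holds. -/
theorem stmt14 (a b c : ℚ)
    (hnd : (1 + a * b) * (a * b + c ^ 2) ≠ (a + b ^ 2) * (a ^ 2 + b * c))
    (lam mu : ℂ)
    (hsum : lam + mu = ((1 + a * b : ℚ) : ℂ) + ((a * b + c ^ 2 : ℚ) : ℂ))
    (hprod : lam * mu =
      ((1 + a * b : ℚ) : ℂ) * ((a * b + c ^ 2 : ℚ) : ℂ) -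
        ((a + b ^ 2 : ℚ) : ℂ) * ((a ^ 2 + b * c : ℚ) : ℂ))
    (hroot : ∃ n : ℕ, 1 ≤ n ∧ (lam / mu) ^ n = 1) :
    (1 + a * b) + (a * b + c ^ 2) = 0 ∨
    ((a * b + c ^ 2) - (1 + a * b)) ^ 2 + 4 * (a + b ^ 2) * (a ^ 2 + b * c) = 0 ∨
    ((1 + a * b) + (a * b + c ^ 2)) ^ 2 +
      (((a * b + c ^ 2) - (1 + a * b)) ^ 2 + 4 * (a + b ^ 2) * (a ^ 2 + b * c)) = 0 ∨
    ((1 + a * b) + (a * b + c ^ 2)) ^ 2 +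
      3 * (((a * b + c ^ 2) - (1 + a * b)) ^ 2 + 4 * (a + b ^ 2) * (a ^ 2 + b * c)) = 0 ∨
    3 * ((1 + a * b) + (a * b + c ^ 2)) ^ 2 +
      (((a * b + c ^ 2) - (1 + a * b)) ^ 2 + 4 * (a + b ^ 2) * (a ^ 2 + b * c)) = 0 := by
  obtain ⟨n, hn, hr⟩ := hroot
  have hP : (1 + a * b) * (a * b + c ^ 2) - (a + b ^ 2) * (a ^ 2 + b * c) ≠ 0 :=
    sub_ne_zero.mpr hnd
  have hsum' : lam + mu = (((1 + a * b) + (a * b + c ^ 2) : ℚ) : ℂ) := by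
    push_cast at hsum ⊢; linear_combination hsum
  have hprod' : lam * mu =
      (((1 + a * b) * (a * b + c ^ 2) - (a + b ^ 2) * (a ^ 2 + b * c) : ℚ) : ℂ) := by
    push_cast at hprod ⊢; linear_combination hprod
  obtain ⟨z, hzb, hz⟩ := aux14
    ((1 + a * b) * (a * b + c ^ 2) - (a + b ^ 2) * (a ^ 2 + b * c))
    ((1 + a * b) + (a * b + c ^ 2)) hP lam mu hsum' hprod' n hn hr
  obtain ⟨hz1, hz2⟩ := abs_le.mp hzb
  interval_cases z <;> push_cast at hz
  · left
    have hA2 : ((1 + a * b) + (a * b + c ^ 2)) ^ 2 = 0 := by linear_combination hz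
    exact pow_eq_zero_iff (n := 2) (by norm_num) |>.mp hA2
  · right; right; right; right
    linear_combination 4 * hz
  · right; right; left
    linear_combination 2 * hz
  · right; right; right; left
    linear_combination 4 * hz
  · right; left
    linear_combination hz
end

section
/- Let a, b, c ∈ ℚ with a·b ≠ 0. Suppose a³ − b³ − ab(1−c) = 0 and (a⁴b + ab⁴)² = (a⁵ + b⁴)(b⁵ + a⁴c). Then (a² − b)·(a⁹ + a⁴b⁴ + a³b⁶ + b⁹) = 0. -/
/-- if `ab ≠ 0`, `a³ - b³ - ab(1-c) = 0` and
`(a⁴b + ab⁴)² = (a⁵ + b⁴)(b⁵ + a⁴c)`, then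
`(a² - b)(a⁹ + a⁴b⁴ + a³b⁶ + b⁹) = 0`. -/
theorem stmt17 (a b c : ℚ) (hab : a * b ≠ 0)
    (h1 : a ^ 3 - b ^ 3 - a * b * (1 - c) = 0)
    (h2 : (a ^ 4 * b + a * b ^ 4) ^ 2 = (a ^ 5 + b ^ 4) * (b ^ 5 + a ^ 4 * c)) :
    (a ^ 2 - b) * (a ^ 9 + a ^ 4 * b ^ 4 + a ^ 3 * b ^ 6 + b ^ 9) = 0 := by
  linear_combination b * h2 + (a ^ 5 + b ^ 4) * a ^ 3 * h1
end

section
/- Let a, b, c ∈ ℚ with a·b ≠ 0. Suppose a³ − b³ − ab(1−c) = 0 and a³ + ab + 2b³ = 0, and suppose in addition that at least one of the following holds: c = ab, or a + b² = 0, or a³ − b³c + ab(c² − 1) = 0. Then (a, b, c) = (−1, 1, −1) or (a, b, c) = (−1/3, −1/3, 1). -/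
/-- if `ab ≠ 0`, `a³ - b³ - ab(1-c) = 0`, `a³ + ab + 2b³ = 0`,
and in addition `c = ab` or `a + b² = 0` or `a³ - b³c + ab(c² - 1) = 0`, then
`(a,b,c) = (-1,1,-1)` or `(a,b,c) = (-1/3,-1/3,1)`. -/
theorem stmt18 (a b c : ℚ) (hab : a * b ≠ 0)
    (h1 : a ^ 3 - b ^ 3 - a * b * (1 - c) = 0)
    (h2 : a ^ 3 + a * b + 2 * b ^ 3 = 0)
    (h3 : c = a * b ∨ a + b ^ 2 = 0 ∨
      a ^ 3 - b ^ 3 * c + a * b * (c ^ 2 - 1) = 0) :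
    (a = -1 ∧ b = 1 ∧ c = -1) ∨ (a = -1/3 ∧ b = -1/3 ∧ c = 1) := by
  have ha : a ≠ 0 := fun h => hab (by rw [h]; ring)
  have hb : b ≠ 0 := fun h => hab (by rw [h]; ring)
  -- key : a*c = 3*b^2 + 2*a
  have key : a * c = 3 * b ^ 2 + 2 * a := by
    have h : b * (a * c - (3 * b ^ 2 + 2 * a)) = 0 := by linear_combination h1 - h2
    rcases mul_eq_zero.1 h with h | h
    · exact absurd h hb
    · linarith
  -- from a = -b^2 we get the first solution
  have case2 : a + b ^ 2 = 0 → (a = -1 ∧ b = 1 ∧ c = -1) ∨ (a = -1/3 ∧ b = -1/3 ∧ c = 1) := by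
    intro hA
    have ha' : a = -b ^ 2 := by linarith
    have hb3 : b ^ 3 * (1 - b ^ 3) = 0 := by
      rw [ha'] at h2; linear_combination h2
    have hb1 : b = 1 := by
      rcases mul_eq_zero.1 hb3 with h | h
      · exact absurd (pow_eq_zero_iff (by norm_num) |>.1 h) hb
      · have hf : (b - 1) * (b ^ 2 + b + 1) = 0 := by linear_combination -h
        rcases mul_eq_zero.1 hf with h' | h'
        · linarith
        · nlinarith [sq_nonneg (2 * b + 1)]
    have ha1 : a = -1 := by rw [hb1] at ha'; linarith
    have hc : c = -1 := by
      rw [ha1, hb1] at key; linarith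
    exact Or.inl ⟨ha1, hb1, hc⟩
  rcases h3 with h3 | h3 | h3
  · -- c = a*b : then a²b - 2a - 3b² = 0, and 2(a+b²)² = 0
    have hE1 : a ^ 2 * b - 2 * a - 3 * b ^ 2 = 0 := by
      rw [h3] at key; linarith [key]
    have hsq : 2 * (a + b ^ 2) ^ 2 = 0 := by
      linear_combination b * h2 - a * hE1
    exact case2 (by nlinarith [sq_nonneg (a + b ^ 2)])
  · exact case2 h3
  · have hf : (1 - c) * (b ^ 3 - a * b * c) = 0 := by linear_combination h3 - h1
    rcases mul_eq_zero.1 hf with h | h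
    · -- c = 1
      have hc : c = 1 := by linarith
      have hA : a = -3 * b ^ 2 := by rw [hc] at key; linarith
      have hb3 : b ^ 3 * (27 * b ^ 3 + 1) = 0 := by
        rw [hA] at h2; linear_combination -h2
      have hbv : b = -1/3 := by
        rcases mul_eq_zero.1 hb3 with h' | h'
        · exact absurd (pow_eq_zero_iff (by norm_num) |>.1 h') hb
        · have hf2 : (3 * b + 1) * (9 * b ^ 2 - 3 * b + 1) = 0 := by linear_combination h'
          rcases mul_eq_zero.1 hf2 with h'' | h''
          · linarith
          · nlinarith [sq_nonneg (6 * b - 1)]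
      have hav : a = -1/3 := by rw [hbv] at hA; norm_num [hA]
      exact Or.inr ⟨hav, hbv, hc⟩
    · -- b³ = a*b*c → ac = b² → a = -b²
      have hac : b * (b ^ 2 - a * c) = 0 := by linear_combination h
      rcases mul_eq_zero.1 hac with h' | h'
      · exact absurd h' hb
      · exact case2 (by nlinarith [key, h'])
end

section
/- Let a, b, c ∈ ℚ with a·b ≠ 0 and a + b² ≠ 0. Suppose a³ − b³ − ab(1−c) = 0 and a³ + ab + 2b³ = 0. Then 4(a + b²)(a² + bc) + (c² − 1)² ≠ 0. -/
/-- if `ab ≠ 0`, `a + b² ≠ 0`, `a³ - b³ - ab(1-c) = 0` and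
`a³ + ab + 2b³ = 0`, then the discriminant `4(a+b²)(a²+bc) + (c²-1)²` is
nonzero. -/
theorem stmt19 (a b c : ℚ) (hab : a * b ≠ 0) (hab2 : a + b ^ 2 ≠ 0)
    (h1 : a ^ 3 - b ^ 3 - a * b * (1 - c) = 0)
    (h2 : a ^ 3 + a * b + 2 * b ^ 3 = 0) :
    4 * (a + b ^ 2) * (a ^ 2 + b * c) + (c ^ 2 - 1) ^ 2 ≠ 0 := by
  have ha : a ≠ 0 := fun h => hab (by rw [h]; ring)
  have hb : b ≠ 0 := fun h => hab (by rw [h]; ring)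
  -- from h1 - h2 : b * (a*c - 3*b^2 - 2*a) = 0
  have hc : a * c - 3 * b ^ 2 - 2 * a = 0 := by
    have hbm : b * (a * c - 3 * b ^ 2 - 2 * a) = 0 := by linear_combination h1 - h2
    rcases mul_eq_zero.mp hbm with h | h
    · exact absurd h hb
    · exact h
  -- a^3 + b^3 ≠ 0
  have hcube : a ^ 3 + b ^ 3 ≠ 0 := by
    intro h
    have hfac : (a + b) * (a ^ 2 - a * b + b ^ 2) = 0 := by linear_combination h
    have hpos : a ^ 2 - a * b + b ^ 2 ≠ 0 := by
      have hb2 : 0 < b ^ 2 := by positivity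
      nlinarith [sq_nonneg (2 * a - b)]
    have hab' : a + b = 0 := by
      rcases mul_eq_zero.mp hfac with h' | h'
      · exact h'
      · exact absurd h' hpos
    have haeq : a = -b := by linarith
    -- plug into h2 : b^3 - b^2 = 0 so b = 1, a = -1
    have hbeq : b ^ 2 * (b - 1) = 0 := by
      rw [haeq] at h2; linear_combination h2
    have hb1 : b = 1 := by
      rcases mul_eq_zero.mp hbeq with h' | h'
      · exact absurd (pow_eq_zero_iff (by norm_num) |>.mp h') hb
      · linarith
    apply hab2
    rw [haeq, hb1]; ring
  intro hD
  -- key identity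
  have key : (4 * (a + b ^ 2) * (a ^ 2 + b * c) + (c ^ 2 - 1) ^ 2) * (a * b) ^ 4
      = (a ^ 3 + b ^ 3) ^ 2 * (9 * a ^ 6 - 14 * a ^ 3 * b ^ 3 + 9 * b ^ 6) := by
    linear_combination (27*b^10 + 54*a*b^8 + 9*a*b^8*c + 30*a^2*b^6 + 12*a^2*b^6*c
        + 3*a^2*b^6*c^2 + 4*a^3*b^4 + 2*a^3*b^4*c + 2*a^3*b^4*c^2 + a^3*b^4*c^3
        + 4*a^3*b^7 + 4*a^4*b^5) * hc
      + (36*b^9 + 90*a*b^7 + 54*a^2*b^5 + 9*a^3*b^3 - 14*a^3*b^6 - 28*a^4*b^4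
        - 9*a^5*b^2 + 14*a^6*b^3 + 9*a^7*b - 9*a^9) * h2
  rw [hD, zero_mul] at key
  have hpos2 : 0 < 9 * a ^ 6 - 14 * a ^ 3 * b ^ 3 + 9 * b ^ 6 := by
    have hb6 : 0 < b ^ 6 := by positivity
    nlinarith [sq_nonneg (a ^ 3 - b ^ 3), sq_nonneg (a ^ 3)]
  have hsq : 0 < (a ^ 3 + b ^ 3) ^ 2 := by positivity
  nlinarith [mul_pos hsq hpos2]
end
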